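/- Suppose that 2 ≤ yi ≤ 2.2 for i = 1, 3, 6 and 2 ≤ yi ≤ 2.51 for i = 2, 4, 5. Then the dihedral angle along the first edge of the simplex S(y1,...,y6) is at least dih(S(2, 2.51, 2, 2, 2.51, 2)) ≈ 0.8639. -/

import Mathlib

noncomputable section

def ufun (a b c : ℝ) : ℝ := -a^2 - b^2 - c^2 + 2*a*b + 2*a*c + 2*b*c

/-- The partial derivative ∂Δ/∂x4 of the Cayley–Menger-type polynomial Δ. -/
def deltaX4 (x1 x2 x3 x4 x5 x6 : ℝ) : ℝ :=
  x1*(-x1+x2+x3-x4+x5+x6) - x1*x4 + x2*x5 + x3*x6 - x2*x3 - x5*x6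

/-- The dihedral angle of the simplex (v0,v1,v2,v3) along the edge v0v1 (the first edge). -/
def dihedralAngle (v0 v1 v2 v3 : EuclideanSpace ℝ (Fin 3)) : ℝ :=
  InnerProductGeometry.angle
    ((v2 - v0) - (((inner ℝ (v2 - v0) (v1 - v0) : ℝ)) / ‖v1 - v0‖^2) • (v1 - v0))
    ((v3 - v0) - (((inner ℝ (v3 - v0) (v1 - v0) : ℝ)) / ‖v1 - v0‖^2) • (v1 - v0))

/-- The dihedral angle along the first edge of S(2, 2.51, 2, 2, 2.51, 2),
computed from cos(dih) = (∂Δ/∂x4)/√(u(x1,x2,x6)u(x1,x3,x5)) at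
(x1,...,x6) = (4, 2.51², 4, 4, 2.51², 4);  ≈ 0.8639. -/
def dihMin : ℝ :=
  Real.arccos (deltaX4 4 (2.51^2) 4 4 (2.51^2) 4 /
    Real.sqrt (ufun 4 (2.51^2) 4 * ufun 4 4 (2.51^2)))

set_option maxHeartbeats 4000000 in
set_option maxRecDepth 4000 in
lemma core (x1 x2 x3 x5 x6 : ℝ)
    (pa : (0:ℝ) ≤ x1 - 4) (pA : (0:ℝ) ≤ 121/25 - x1)
    (pB : (0:ℝ) ≤ x2 - 4) (pb : (0:ℝ) ≤ 63001/10000 - x2)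
    (pc : (0:ℝ) ≤ x3 - 4) (pC : (0:ℝ) ≤ 121/25 - x3)
    (pE : (0:ℝ) ≤ x5 - 4) (pe : (0:ℝ) ≤ 63001/10000 - x5)
    (pg : (0:ℝ) ≤ x6 - 4) (pG : (0:ℝ) ≤ 121/25 - x6) :
    96999 * (deltaX4 x1 x2 x3 4 x5 x6) * (ufun x1 x2 x6 + ufun x1 x3 x5)
      ≤ 126002 * (ufun x1 x2 x6 * ufun x1 x3 x5) := by
  simp only [deltaX4, ufun]
  linarith [
    (mul_nonneg (mul_nonneg pA pb) pb),
    (mul_nonneg (mul_nonneg (mul_nonneg pA pb) pb) pb),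
    (mul_nonneg (mul_nonneg (mul_nonneg pA pb) pb) pa),
    (mul_nonneg (mul_nonneg (mul_nonneg pA pb) pb) pg),
    (mul_nonneg (mul_nonneg pA pb) pe),
    (mul_nonneg (mul_nonneg pA pb) pa),
    (mul_nonneg (mul_nonneg (mul_nonneg pA pb) pa) pa),
    (mul_nonneg (mul_nonneg pA pb) pc),
    (mul_nonneg (mul_nonneg (mul_nonneg pA pb) pc) pc),
    (mul_nonneg (mul_nonneg (mul_nonneg pA pb) pc) pg),
    (mul_nonneg (mul_nonneg pA pe) pe),
    (mul_nonneg (mul_nonneg (mul_nonneg pA pe) pe) pe),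
    (mul_nonneg (mul_nonneg (mul_nonneg pA pe) pe) pa),
    (mul_nonneg (mul_nonneg (mul_nonneg pA pe) pe) pc),
    (mul_nonneg (mul_nonneg pA pe) pa),
    (mul_nonneg (mul_nonneg (mul_nonneg pA pe) pa) pa),
    (mul_nonneg (mul_nonneg (mul_nonneg pA pe) pc) pg),
    (mul_nonneg (mul_nonneg pA pe) pg),
    (mul_nonneg (mul_nonneg (mul_nonneg pA pe) pg) pg),
    (mul_nonneg (mul_nonneg (mul_nonneg pA pa) pa) pa),
    (mul_nonneg (mul_nonneg pA pa) pc),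
    (mul_nonneg (mul_nonneg (mul_nonneg pA pa) pc) pc),
    (mul_nonneg (mul_nonneg pA pa) pg),
    (mul_nonneg (mul_nonneg (mul_nonneg pA pa) pg) pg),
    (mul_nonneg (mul_nonneg pA pc) pc),
    (mul_nonneg (mul_nonneg (mul_nonneg pA pc) pc) pg),
    (mul_nonneg (mul_nonneg (mul_nonneg pA pc) pg) pg),
    (mul_nonneg (mul_nonneg pA pg) pg),
    (mul_nonneg pC pb),
    (mul_nonneg (mul_nonneg pC pb) pb),
    (mul_nonneg (mul_nonneg pC pb) pe),
    (mul_nonneg (mul_nonneg pC pb) pa),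
    (mul_nonneg (mul_nonneg (mul_nonneg pC pb) pa) pc),
    (mul_nonneg (mul_nonneg (mul_nonneg pC pb) pa) pg),
    (mul_nonneg (mul_nonneg pC pb) pc),
    (mul_nonneg (mul_nonneg pC pb) pg),
    (mul_nonneg (mul_nonneg pC pe) pe),
    (mul_nonneg (mul_nonneg (mul_nonneg pC pe) pe) pa),
    (mul_nonneg (mul_nonneg (mul_nonneg pC pe) pa) pg),
    (mul_nonneg (mul_nonneg pC pe) pc),
    (mul_nonneg (mul_nonneg pC pe) pg),
    (mul_nonneg (mul_nonneg pC pa) pa),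
    (mul_nonneg (mul_nonneg (mul_nonneg pC pa) pa) pc),
    (mul_nonneg (mul_nonneg pC pa) pc),
    (mul_nonneg (mul_nonneg (mul_nonneg pC pa) pc) pg),
    (mul_nonneg (mul_nonneg (mul_nonneg pC pa) pg) pg),
    (mul_nonneg pC pc),
    (mul_nonneg (mul_nonneg pC pc) pg),
    (mul_nonneg (mul_nonneg pC pg) pg),
    (mul_nonneg (mul_nonneg pG pb) pb),
    (mul_nonneg (mul_nonneg (mul_nonneg pG pb) pb) pa),
    (mul_nonneg (mul_nonneg pG pb) pe),
    (mul_nonneg (mul_nonneg (mul_nonneg pG pb) pa) pc),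
    (mul_nonneg (mul_nonneg pG pb) pc),
    (mul_nonneg (mul_nonneg pG pb) pg),
    (mul_nonneg pG pe),
    (mul_nonneg (mul_nonneg pG pe) pe),
    (mul_nonneg (mul_nonneg pG pe) pa),
    (mul_nonneg (mul_nonneg (mul_nonneg pG pe) pa) pc),
    (mul_nonneg (mul_nonneg (mul_nonneg pG pe) pa) pg),
    (mul_nonneg (mul_nonneg pG pe) pc),
    (mul_nonneg (mul_nonneg pG pe) pg),
    (mul_nonneg (mul_nonneg pG pa) pa),
    (mul_nonneg (mul_nonneg (mul_nonneg pG pa) pa) pg),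
    (mul_nonneg (mul_nonneg (mul_nonneg pG pa) pc) pc),
    (mul_nonneg (mul_nonneg (mul_nonneg pG pa) pc) pg),
    (mul_nonneg (mul_nonneg pG pa) pg),
    (mul_nonneg (mul_nonneg pG pc) pc),
    (mul_nonneg (mul_nonneg pG pc) pg),
    (mul_nonneg pG pg),
    pb,
    (mul_nonneg (mul_nonneg (mul_nonneg pb pb) pb) pe),
    (mul_nonneg (mul_nonneg (mul_nonneg pb pb) pb) pc),
    (mul_nonneg (mul_nonneg pb pb) pe),
    (mul_nonneg (mul_nonneg (mul_nonneg pb pb) pe) pe),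
    (mul_nonneg (mul_nonneg (mul_nonneg pb pb) pe) pa),
    (mul_nonneg (mul_nonneg (mul_nonneg pb pb) pe) pc),
    (mul_nonneg (mul_nonneg (mul_nonneg pb pb) pe) pg),
    (mul_nonneg (mul_nonneg (mul_nonneg pb pb) pa) pB),
    (mul_nonneg (mul_nonneg (mul_nonneg pb pb) pa) pc),
    (mul_nonneg (mul_nonneg pb pb) pB),
    (mul_nonneg (mul_nonneg (mul_nonneg pb pb) pc) pc),
    (mul_nonneg (mul_nonneg (mul_nonneg pb pb) pc) pg),
    (mul_nonneg (mul_nonneg pb pe) pe),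
    (mul_nonneg (mul_nonneg (mul_nonneg pb pe) pe) pe),
    (mul_nonneg (mul_nonneg (mul_nonneg pb pe) pe) pa),
    (mul_nonneg (mul_nonneg (mul_nonneg pb pe) pe) pc),
    (mul_nonneg (mul_nonneg (mul_nonneg pb pe) pe) pg),
    (mul_nonneg (mul_nonneg (mul_nonneg pb pe) pa) pa),
    (mul_nonneg (mul_nonneg (mul_nonneg pb pe) pa) pc),
    (mul_nonneg (mul_nonneg (mul_nonneg pb pe) pa) pg),
    (mul_nonneg (mul_nonneg (mul_nonneg pb pe) pc) pc),
    (mul_nonneg (mul_nonneg (mul_nonneg pb pe) pc) pg),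
    (mul_nonneg (mul_nonneg (mul_nonneg pb pe) pg) pg),
    (mul_nonneg pb pa),
    (mul_nonneg (mul_nonneg (mul_nonneg pb pa) pa) pB),
    (mul_nonneg (mul_nonneg (mul_nonneg pb pa) pa) pc),
    (mul_nonneg (mul_nonneg (mul_nonneg pb pa) pa) pg),
    (mul_nonneg (mul_nonneg pb pa) pB),
    (mul_nonneg (mul_nonneg (mul_nonneg pb pa) pB) pg),
    (mul_nonneg (mul_nonneg pb pa) pE),
    (mul_nonneg (mul_nonneg pb pa) pg),
    (mul_nonneg (mul_nonneg (mul_nonneg pb pa) pg) pg),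
    (mul_nonneg pb pB),
    (mul_nonneg (mul_nonneg pb pB) pc),
    (mul_nonneg (mul_nonneg pb pB) pg),
    (mul_nonneg (mul_nonneg (mul_nonneg pb pc) pc) pc),
    (mul_nonneg (mul_nonneg (mul_nonneg pb pc) pc) pg),
    (mul_nonneg (mul_nonneg pb pc) pE),
    (mul_nonneg (mul_nonneg (mul_nonneg pb pc) pg) pg),
    (mul_nonneg pb pE),
    (mul_nonneg (mul_nonneg pb pE) pg),
    (mul_nonneg pb pg),
    pe,
    (mul_nonneg (mul_nonneg (mul_nonneg pe pe) pe) pg),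
    (mul_nonneg (mul_nonneg (mul_nonneg pe pe) pa) pE),
    (mul_nonneg (mul_nonneg (mul_nonneg pe pe) pa) pg),
    (mul_nonneg (mul_nonneg (mul_nonneg pe pe) pc) pg),
    (mul_nonneg (mul_nonneg pe pe) pE),
    (mul_nonneg (mul_nonneg (mul_nonneg pe pe) pg) pg),
    (mul_nonneg pe pa),
    (mul_nonneg (mul_nonneg (mul_nonneg pe pa) pa) pc),
    (mul_nonneg (mul_nonneg (mul_nonneg pe pa) pa) pE),
    (mul_nonneg (mul_nonneg (mul_nonneg pe pa) pa) pg),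
    (mul_nonneg (mul_nonneg pe pa) pB),
    (mul_nonneg (mul_nonneg pe pa) pc),
    (mul_nonneg (mul_nonneg (mul_nonneg pe pa) pc) pc),
    (mul_nonneg (mul_nonneg (mul_nonneg pe pa) pc) pE),
    (mul_nonneg (mul_nonneg pe pa) pE),
    (mul_nonneg pe pB),
    (mul_nonneg (mul_nonneg pe pB) pc),
    (mul_nonneg (mul_nonneg pe pB) pg),
    (mul_nonneg pe pc),
    (mul_nonneg (mul_nonneg (mul_nonneg pe pc) pc) pg),
    (mul_nonneg (mul_nonneg pe pc) pE),
    (mul_nonneg (mul_nonneg (mul_nonneg pe pc) pg) pg),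
    (mul_nonneg pe pE),
    (mul_nonneg (mul_nonneg pe pE) pg),
    (mul_nonneg (mul_nonneg (mul_nonneg pe pg) pg) pg),
    pa,
    (mul_nonneg pa pa),
    (mul_nonneg (mul_nonneg pa pa) pa),
    (mul_nonneg (mul_nonneg (mul_nonneg pa pa) pa) pB),
    (mul_nonneg (mul_nonneg (mul_nonneg pa pa) pa) pc),
    (mul_nonneg (mul_nonneg (mul_nonneg pa pa) pa) pE),
    (mul_nonneg (mul_nonneg (mul_nonneg pa pa) pa) pg),
    (mul_nonneg (mul_nonneg pa pa) pB),
    (mul_nonneg (mul_nonneg (mul_nonneg pa pa) pc) pg),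
    (mul_nonneg (mul_nonneg pa pa) pE),
    (mul_nonneg (mul_nonneg pa pB) pc),
    (mul_nonneg (mul_nonneg (mul_nonneg pa pB) pc) pc),
    (mul_nonneg (mul_nonneg (mul_nonneg pa pB) pc) pg),
    (mul_nonneg pa pc),
    (mul_nonneg (mul_nonneg (mul_nonneg pa pc) pc) pc),
    (mul_nonneg (mul_nonneg (mul_nonneg pa pc) pE) pg),
    (mul_nonneg (mul_nonneg pa pc) pg),
    (mul_nonneg (mul_nonneg pa pE) pg),
    (mul_nonneg (mul_nonneg (mul_nonneg pa pE) pg) pg),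
    (mul_nonneg pa pg),
    (mul_nonneg (mul_nonneg (mul_nonneg pa pg) pg) pg),
    (mul_nonneg pB pc),
    (mul_nonneg (mul_nonneg pB pc) pc),
    (mul_nonneg (mul_nonneg pB pc) pg),
    (mul_nonneg (mul_nonneg pB pg) pg),
    pc,
    (mul_nonneg (mul_nonneg pc pc) pc),
    (mul_nonneg (mul_nonneg (mul_nonneg pc pc) pc) pg),
    (mul_nonneg (mul_nonneg pc pc) pE),
    (mul_nonneg (mul_nonneg (mul_nonneg pc pc) pg) pg),
    (mul_nonneg (mul_nonneg pc pE) pg),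
    (mul_nonneg pc pg),
    (mul_nonneg (mul_nonneg (mul_nonneg pc pg) pg) pg),
    (mul_nonneg pE pg),
    (mul_nonneg (mul_nonneg pE pg) pg),
    pg,
    (mul_nonneg (mul_nonneg pg pg) pg)
  ]


lemma ufun_symm (a b c : ℝ) : ufun a b c = ufun a c b := by simp only [ufun]; ring

lemma upos (a b c : ℝ) (ha : 4 ≤ a) (ha' : a ≤ 121/25) (hb : 4 ≤ b)
    (hb' : b ≤ 63001/10000) (hc : 4 ≤ c) (hc' : c ≤ 121/25) : 0 < ufun a b c := by
  simp only [ufun]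
  nlinarith [mul_nonneg (show (0:ℝ) ≤ 71401/10000 - (a+b-c) by linarith)
      (show (0:ℝ) ≤ (a+b-c) - 3 by linarith),
    mul_nonneg (show (0:ℝ) ≤ a - 4 by linarith) (show (0:ℝ) ≤ b - 4 by linarith)]

lemma key_ineq (x1 x2 x3 x4 x5 x6 : ℝ)
    (pa : 4 ≤ x1) (pA : x1 ≤ 121/25)
    (pB : 4 ≤ x2) (pb : x2 ≤ 63001/10000)
    (pc : 4 ≤ x3) (pC : x3 ≤ 121/25)
    (pd : 4 ≤ x4)
    (pE : 4 ≤ x5) (pe : x5 ≤ 63001/10000)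
    (pg : 4 ≤ x6) (pG : x6 ≤ 121/25) :
    96999 * deltaX4 x1 x2 x3 x4 x5 x6
      ≤ 63001 * Real.sqrt (ufun x1 x2 x6 * ufun x1 x3 x5) := by
  have hu12 : 0 < ufun x1 x2 x6 := upos x1 x2 x6 pa pA pB pb pg pG
  have hu13 : 0 < ufun x1 x3 x5 := by
    rw [ufun_symm]
    exact upos x1 x5 x3 pa pA pE pe pc pC
  have hcore := core x1 x2 x3 x5 x6 (by linarith) (by linarith) (by linarith) (by linarith)
    (by linarith) (by linarith) (by linarith) (by linarith) (by linarith) (by linarith)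
  have hmon : deltaX4 x1 x2 x3 x4 x5 x6 ≤ deltaX4 x1 x2 x3 4 x5 x6 := by
    simp only [deltaX4]
    have h := mul_nonneg (show (0:ℝ) ≤ x1 by linarith) (show (0:ℝ) ≤ x4 - 4 by linarith)
    nlinarith [h]
  set U := ufun x1 x2 x6 with hU
  set V := ufun x1 x3 x5 with hV
  set s := Real.sqrt (U * V) with hsdef
  have hspos : 0 < s := Real.sqrt_pos.mpr (mul_pos hu12 hu13)
  have hsq : s^2 = U * V := Real.sq_sqrt (mul_pos hu12 hu13).le
  have h2s : 2*s ≤ U + V := by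
    have e1' : Real.sqrt U ^ 2 = U := Real.sq_sqrt hu12.le
    have e2' : Real.sqrt V ^ 2 = V := Real.sq_sqrt hu13.le
    have e3' : s = Real.sqrt U * Real.sqrt V := by rw [hsdef, Real.sqrt_mul hu12.le]
    nlinarith [sq_nonneg (Real.sqrt U - Real.sqrt V)]
  have hsum : 0 < U + V := by linarith
  have step1 : 96999 * deltaX4 x1 x2 x3 x4 x5 x6 * (U + V)
      ≤ 96999 * deltaX4 x1 x2 x3 4 x5 x6 * (U + V) := by
    have := mul_le_mul_of_nonneg_right
      (mul_le_mul_of_nonneg_left hmon (by norm_num : (0:ℝ) ≤ 96999)) hsum.le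
    linarith
  have step2 : 126002 * (U * V) ≤ 63001 * ((U + V) * s) := by
    have h := mul_le_mul_of_nonneg_right h2s hspos.le
    nlinarith [h, hsq]
  have hfin : (96999 * deltaX4 x1 x2 x3 x4 x5 x6) * (U + V) ≤ (63001 * s) * (U + V) := by
    calc (96999 * deltaX4 x1 x2 x3 x4 x5 x6) * (U + V)
        ≤ 96999 * deltaX4 x1 x2 x3 4 x5 x6 * (U + V) := step1
      _ ≤ 126002 * (U * V) := hcore
      _ ≤ 63001 * ((U + V) * s) := step2
      _ = (63001 * s) * (U + V) := by ring
  exact le_of_mul_le_mul_right hfin hsum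

lemma arccos_anti {a b : ℝ} (h : a ≤ b) : Real.arccos b ≤ Real.arccos a := by
  unfold Real.arccos
  have := Real.monotone_arcsin h
  linarith

lemma dihMin_eq : dihMin = Real.arccos (63001/96999) := by
  unfold dihMin
  have h : ufun 4 (2.51^2) 4 * ufun 4 4 (2.51^2) = ((6111033999:ℝ)/10^8)^2 := by
    norm_num [ufun]
  rw [h, Real.sqrt_sq (by norm_num)]
  norm_num [deltaX4]

lemma sq_mono {y lo hi : ℝ} (h : lo ≤ y) (h' : y ≤ hi) (hlo : 0 ≤ lo) :
    lo^2 ≤ y^2 ∧ y^2 ≤ hi^2 := by constructor <;> nlinarith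

/-- If 2 ≤ yi ≤ 2.2 for i = 1,3,6 and 2 ≤ yi ≤ 2.51 for i = 2,4,5, then the
dihedral angle along the first edge of S(y1,...,y6) is at least
dih(S(2, 2.51, 2, 2, 2.51, 2)). -/
theorem dihedral_ge_dihmin
    (y1 y2 y3 y4 y5 y6 : ℝ)
    (h1 : y1 ∈ Set.Icc (2:ℝ) 2.2) (h3 : y3 ∈ Set.Icc (2:ℝ) 2.2)
    (h6 : y6 ∈ Set.Icc (2:ℝ) 2.2)
    (h2 : y2 ∈ Set.Icc (2:ℝ) 2.51) (h4 : y4 ∈ Set.Icc (2:ℝ) 2.51)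
    (h5 : y5 ∈ Set.Icc (2:ℝ) 2.51)
    (v0 v1 v2 v3 : EuclideanSpace ℝ (Fin 3))
    (hnd : AffineIndependent ℝ ![v0, v1, v2, v3])
    (e1 : dist v0 v1 = y1) (e2 : dist v0 v2 = y2) (e3 : dist v0 v3 = y3)
    (e4 : dist v2 v3 = y4) (e5 : dist v1 v3 = y5) (e6 : dist v1 v2 = y6) :
    dihMin ≤ dihedralAngle v0 v1 v2 v3 := by
  have b1 := sq_mono h1.1 h1.2 (by norm_num)
  have b2 := sq_mono h2.1 h2.2 (by norm_num)
  have b3 := sq_mono h3.1 h3.2 (by norm_num)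
  have b4 := sq_mono h4.1 h4.2 (by norm_num)
  have b5 := sq_mono h5.1 h5.2 (by norm_num)
  have b6 := sq_mono h6.1 h6.2 (by norm_num)
  set x1 := y1^2 with hx1
  set x2 := y2^2 with hx2
  set x3 := y3^2 with hx3
  set x4 := y4^2 with hx4
  set x5 := y5^2 with hx5
  set x6 := y6^2 with hx6
  have c22 : ((2.2:ℝ))^2 = 121/25 := by norm_num
  have c251 : ((2.51:ℝ))^2 = 63001/10000 := by norm_num
  have c2 : ((2:ℝ))^2 = 4 := by norm_num
  rw [c2, c22] at b1 b3 b6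
  rw [c2, c251] at b2 b4 b5
  have hx1pos : (0:ℝ) < x1 := by linarith [b1.1]
  have hx1ne : x1 ≠ 0 := ne_of_gt hx1pos
  set u := v1 - v0 with hu
  set w := v2 - v0 with hw
  set z := v3 - v0 with hz
  have n1 : ‖u‖^2 = x1 := by rw [hu, ← dist_eq_norm, dist_comm, e1]
  have n2 : ‖w‖^2 = x2 := by rw [hw, ← dist_eq_norm, dist_comm, e2]
  have n3 : ‖z‖^2 = x3 := by rw [hz, ← dist_eq_norm, dist_comm, e3]
  have n4 : ‖w - z‖^2 = x4 := by
    have h : w - z = v2 - v3 := by rw [hw, hz]; abel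
    rw [h, ← dist_eq_norm, e4]
  have n5 : ‖z - u‖^2 = x5 := by
    have h : z - u = v3 - v1 := by rw [hz, hu]; abel
    rw [h, ← dist_eq_norm, dist_comm, e5]
  have n6 : ‖w - u‖^2 = x6 := by
    have h : w - u = v2 - v1 := by rw [hw, hu]; abel
    rw [h, ← dist_eq_norm, dist_comm, e6]
  have i2 : (inner ℝ w u : ℝ) = (x2 + x1 - x6)/2 := by
    have h := norm_sub_sq_real w u
    rw [n1, n2, n6] at h; linarith
  have i3 : (inner ℝ z u : ℝ) = (x3 + x1 - x5)/2 := by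
    have h := norm_sub_sq_real z u
    rw [n1, n3, n5] at h; linarith
  have i23 : (inner ℝ w z : ℝ) = (x2 + x3 - x4)/2 := by
    have h := norm_sub_sq_real w z
    rw [n2, n3, n4] at h; linarith
  set P2 : EuclideanSpace ℝ (Fin 3) := w - (((inner ℝ w u : ℝ)) / ‖u‖^2) • u with hP2def
  set P3 : EuclideanSpace ℝ (Fin 3) := z - (((inner ℝ z u : ℝ)) / ‖u‖^2) • u with hP3def
  have hdih : dihedralAngle v0 v1 v2 v3 = InnerProductGeometry.angle P2 P3 := rfl
  have hu12 : 0 < ufun x1 x2 x6 := upos x1 x2 x6 b1.1 b1.2 b2.1 b2.2 b6.1 b6.2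
  have hu13 : 0 < ufun x1 x3 x5 := by
    rw [ufun_symm]
    exact upos x1 x5 x3 b1.1 b1.2 b5.1 b5.2 b3.1 b3.2
  have hip : (inner ℝ P2 P3 : ℝ) = deltaX4 x1 x2 x3 x4 x5 x6 / (4*x1) := by
    rw [hP2def, hP3def, n1]
    simp only [inner_sub_left, inner_sub_right, real_inner_smul_left, real_inner_smul_right,
      real_inner_self_eq_norm_sq]
    have iuw : (inner ℝ u w : ℝ) = (x2 + x1 - x6)/2 := by rw [real_inner_comm]; exact i2
    have iuz : (inner ℝ u z : ℝ) = (x3 + x1 - x5)/2 := by rw [real_inner_comm]; exact i3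
    simp only [n1, i2, i3, i23, iuw, iuz]
    simp only [deltaX4]
    field_simp
    ring
  have hnp2 : ‖P2‖^2 = ufun x1 x2 x6 / (4*x1) := by
    rw [hP2def, n1]
    have h := norm_sub_sq_real w ((((inner ℝ w u : ℝ)) / x1) • u)
    rw [real_inner_smul_right, norm_smul, mul_pow, Real.norm_eq_abs, sq_abs, n1, n2, i2] at h
    rw [i2, h]
    simp only [ufun]
    field_simp
    ring
  have hnp3 : ‖P3‖^2 = ufun x1 x3 x5 / (4*x1) := by
    rw [hP3def, n1]
    have h := norm_sub_sq_real z ((((inner ℝ z u : ℝ)) / x1) • u)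
    rw [real_inner_smul_right, norm_smul, mul_pow, Real.norm_eq_abs, sq_abs, n1, n3, i3] at h
    rw [i3, h]
    simp only [ufun]
    field_simp
    ring
  set s := Real.sqrt (ufun x1 x2 x6 * ufun x1 x3 x5) with hsdef
  have hspos : 0 < s := Real.sqrt_pos.mpr (mul_pos hu12 hu13)
  have hprod : ‖P2‖ * ‖P3‖ = s / (4*x1) := by
    have hp2 : ‖P2‖ = Real.sqrt (ufun x1 x2 x6 / (4*x1)) := by
      rw [← hnp2, Real.sqrt_sq (norm_nonneg _)]
    have hp3 : ‖P3‖ = Real.sqrt (ufun x1 x3 x5 / (4*x1)) := by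
      rw [← hnp3, Real.sqrt_sq (norm_nonneg _)]
    rw [hp2, hp3, ← Real.sqrt_mul (by positivity)]
    rw [show ufun x1 x2 x6 / (4*x1) * (ufun x1 x3 x5 / (4*x1))
        = (ufun x1 x2 x6 * ufun x1 x3 x5) / (4*x1)^2 by field_simp]
    rw [Real.sqrt_div (by positivity), Real.sqrt_sq (by positivity), hsdef]
  have hkey := key_ineq x1 x2 x3 x4 x5 x6 b1.1 b1.2 b2.1 b2.2 b3.1 b3.2 b4.1 b5.1 b5.2 b6.1 b6.2
  have hratio : (inner ℝ P2 P3 : ℝ) / (‖P2‖ * ‖P3‖) = deltaX4 x1 x2 x3 x4 x5 x6 / s := by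
    rw [hip, hprod]
    rw [div_div_div_cancel_right₀]
    positivity
  have hle : (inner ℝ P2 P3 : ℝ) / (‖P2‖ * ‖P3‖) ≤ 63001/96999 := by
    rw [hratio, div_le_div_iff₀ hspos (by norm_num : (0:ℝ) < 96999)]
    linarith [hkey]
  rw [hdih, dihMin_eq]
  unfold InnerProductGeometry.angle
  exact arccos_anti hle
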